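/- Let d : ℝ^m → ℝ be differentiable and 1-strongly convex on a nonempty closed convex set X ⊆ ℝ^m, and for z ∈ ℝ^m define ∇d*(z) = argmax_{x ∈ X} (⟨z, x⟩ - d(x)) (which exists and is unique by strong convexity). Then the map z ↦ ∇d*(z) is 1-Lipschitz: for all z, y ∈ ℝ^m, ‖∇d*(z) - ∇d*(y)‖ ≤ ‖z - y‖. -/

import Mathlib

open RealInnerProductSpace

theorem stmt_1 {m : ℕ} (X : Set (EuclideanSpace ℝ (Fin m)))
    (hXne : X.Nonempty) (hXclosed : IsClosed X) (hXconvex : Convex ℝ X)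
    (d : EuclideanSpace ℝ (Fin m) → ℝ) (hd : Differentiable ℝ d)
    (hsc : ∀ x ∈ X, ∀ y ∈ X,
      d x - d y - ⟪gradient d y, x - y⟫ ≥ (1/2) * ‖x - y‖ ^ 2)
    (D : EuclideanSpace ℝ (Fin m) → EuclideanSpace ℝ (Fin m))
    (hD : ∀ z, D z ∈ X ∧ ∀ x ∈ X, ⟪z, x⟫ - d x ≤ ⟪z, D z⟫ - d (D z)) :
    ∀ z y, ‖D z - D y‖ ≤ ‖z - y‖ := by
  -- Variational inequality at the maximizer
  have VI : ∀ z, ∀ x ∈ X, ⟪z, x - D z⟫ ≤ ⟪gradient d (D z), x - D z⟫ := by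
    intro z x hx
    obtain ⟨hu, hmax⟩ := hD z
    set u := D z with hu_def
    set v := x - u with hv_def
    set g : ℝ → ℝ := fun t => ⟪z, u + t • v⟫ - d (u + t • v) with hg_def
    have hc : HasDerivAt (fun t : ℝ => u + t • v) v 0 := by
      simpa using ((hasDerivAt_id (0:ℝ)).smul_const v).const_add u
    have hdc : HasDerivAt (fun t : ℝ => d (u + t • v)) ⟪gradient d u, v⟫ 0 := by
      have := ((hd (u + (0:ℝ) • v)).hasGradientAt.hasFDerivAt).comp_hasDerivAt 0 hc
      simpa [Function.comp_def] using this
    have hzc : HasDerivAt (fun t : ℝ => ⟪z, u + t • v⟫) ⟪z, v⟫ 0 := by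
      have h1 : (fun t : ℝ => ⟪z, u + t • v⟫) = fun t : ℝ => ⟪z, u⟫ + t * ⟪z, v⟫ := by
        funext t
        rw [inner_add_right, real_inner_smul_right]
      rw [h1]
      simpa using ((hasDerivAt_id (0:ℝ)).mul_const ⟪z, v⟫).const_add ⟪z, u⟫
    have hg' : HasDerivAt g (⟪z, v⟫ - ⟪gradient d u, v⟫) 0 := hzc.sub hdc
    -- g t ≤ g 0 for t ∈ (0,1)
    have hle : ∀ t ∈ Set.Ioo (0:ℝ) 1, g t ≤ g 0 := by
      intro t ht
      have hmem : u + t • v ∈ X := by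
        have : (1 - t) • u + t • x ∈ X :=
          hXconvex hu hx (by linarith [ht.2]) (le_of_lt ht.1) (by ring)
        have heq : u + t • v = (1 - t) • u + t • x := by
          simp [hv_def, smul_sub, sub_smul]
          module
        rwa [heq]
      have := hmax _ hmem
      simp only [hg_def]
      simpa using this
    -- derivative at 0 is ≤ 0
    have hslope : Filter.Tendsto (slope g 0) (nhdsWithin 0 (Set.Ioi 0)) (nhds (⟪z, v⟫ - ⟪gradient d u, v⟫)) :=
      (hasDerivAt_iff_tendsto_slope.mp hg').mono_left
        (nhdsWithin_mono _ (fun t ht => Set.mem_compl_singleton_iff.mpr (ne_of_gt ht)))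
    have hderiv_nonpos : ⟪z, v⟫ - ⟪gradient d u, v⟫ ≤ 0 := by
      refine le_of_tendsto hslope ?_
      filter_upwards [Ioo_mem_nhdsGT_of_mem (Set.mem_Ico.mpr ⟨le_refl 0, one_pos⟩)] with t ht
      have := hle t ht
      have hts : slope g 0 t = (g t - g 0) / t := by simp [slope_def_field]
      rw [hts]
      apply div_nonpos_of_nonpos_of_nonneg (by linarith) (le_of_lt ht.1)
    linarith
  intro z y
  obtain ⟨hu, _⟩ := hD z
  obtain ⟨hw, _⟩ := hD y
  set u := D z
  set w := D y
  -- strong monotonicity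
  have h1 := hsc u hu w hw
  have h2 := hsc w hw u hu
  have hnorm : ‖w - u‖ = ‖u - w‖ := norm_sub_rev _ _
  have hmono : ⟪gradient d u, u - w⟫ - ⟪gradient d w, u - w⟫ ≥ ‖u - w‖ ^ 2 := by
    have hrev : ⟪gradient d u, w - u⟫ = -⟪gradient d u, u - w⟫ := by
      rw [← inner_neg_right]; congr 1; abel
    have hnorm2 : ‖w - u‖ ^ 2 = ‖u - w‖ ^ 2 := by rw [hnorm]
    rw [hrev] at h2
    linarith
  have hVI1 := VI z w hw
  have hVI2 := VI y u hu
  have hrev2 : ⟪z, w - u⟫ = -⟪z, u - w⟫ := by rw [← inner_neg_right]; congr 1; abel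
  have hrev3 : ⟪gradient d u, w - u⟫ = -⟪gradient d u, u - w⟫ := by
    rw [← inner_neg_right]; congr 1; abel
  have key : ‖u - w‖ ^ 2 ≤ ⟪z - y, u - w⟫ := by
    have hz : ⟪gradient d u, u - w⟫ ≤ ⟪z, u - w⟫ := by
      rw [hrev2, hrev3] at hVI1; linarith
    have hy : ⟪y, u - w⟫ ≤ ⟪gradient d w, u - w⟫ := hVI2
    have : ⟪z - y, u - w⟫ = ⟪z, u - w⟫ - ⟪y, u - w⟫ := by rw [inner_sub_left]
    linarith
  have hcs : ⟪z - y, u - w⟫ ≤ ‖z - y‖ * ‖u - w‖ := real_inner_le_norm _ _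
  rcases eq_or_lt_of_le (norm_nonneg (u - w)) with h0 | h0
  · rw [← h0]; exact norm_nonneg _
  · have : ‖u - w‖ ^ 2 ≤ ‖z - y‖ * ‖u - w‖ := le_trans key hcs
    nlinarith
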